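/- For every x ∈ 𝔄 the multiplication operator identity U² = -2UL² + 2LUL + 4L⁴ holds; elementwise, x²·(x²·y) = -2·x²·(x·(x·y)) + 2·x·(x²·(x·y)) + 4·x·(x·(x·(x·y))) for all y ∈ 𝔄. -/
import Mathlib

private lemma zsmul_cancel_aux {F A : Type*} [Field F] [AddCommGroup A] [Module F A]
    (n : ℤ) (hn : ((n : ℤ) : F) ≠ 0) {a : A} (h : (n : ℤ) • a = 0) : a = 0 := by
  have h' : ((n : ℤ) : F) • a = 0 := by rw [Int.cast_smul_eq_zsmul]; exact h
  have hh := inv_smul_smul₀ hn a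
  rw [h', smul_zero] at hh
  exact hh.symm

/-- 𝔄 is a commutative (not necessarily associative) algebra over a field `F` of
characteristic ≠ 2, 3, satisfying the identities `x⁴ = 0` and `x(x²x²) = 0`. -/
theorem stmt_15 {F A : Type*} [Field F] [NonUnitalNonAssocRing A]
    [Module F A] [SMulCommClass F A A] [IsScalarTower F A A]
    (hcomm : ∀ a b : A, a * b = b * a)
    (h2 : (2 : F) ≠ 0) (h3 : (3 : F) ≠ 0)
    (hx4 : ∀ x : A, x * (x * (x * x)) = 0)
    (hx5 : ∀ x : A, x * ((x * x) * (x * x)) = 0)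
    (x y : A) :
    x * x * (x * x * (y)) =
      ((-2 : ℤ) • (x * x * (x * (x * (y))))) + (2 : ℤ) • (x * (x * x * (x * (y)))) + (4 : ℤ) • (x * (x * (x * (x * (y))))) := by
  have h2' : (((2:ℤ) : ℤ) : F) ≠ 0 := by
    have : (((2:ℤ) : ℤ) : F) = (2:F) := by norm_num
    rw [this]; exact h2
  have h12' : (((12:ℤ) : ℤ) : F) ≠ 0 := by
    have : (((12:ℤ) : ℤ) : F) = 2*2*3 := by norm_num
    rw [this]; exact mul_ne_zero (mul_ne_zero h2 h2) h3
  have c2 : ∀ a : A, (2:ℤ) • a = 0 → a = 0 := fun a ha => zsmul_cancel_aux 2 h2' ha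
  have c12 : ∀ a : A, (12:ℤ) • a = 0 → a = 0 := fun a ha => zsmul_cancel_aux 12 h12' ha
  -- Step 1: full (3,1)-linearization of x⁴ = 0
  have rawI1 : ∀ a b : A,
      b*(a*(a*a)) + a*(b*(a*a)) + a*(a*(b*a)) + a*(a*(a*b)) = 0 := by
    intro a b
    have e1 : (2:ℤ) • (b*(a*(a*a)) + a*(b*(a*a)) + a*(a*(b*a)) + a*(a*(a*b)))
        + (2:ℤ) • (b*(b*(b*a)) + b*(b*(a*b)) + b*(a*(b*b)) + a*(b*(b*b))) = 0 := by
      have key : (2:ℤ) • (b*(a*(a*a)) + a*(b*(a*a)) + a*(a*(b*a)) + a*(a*(a*b)))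
          + (2:ℤ) • (b*(b*(b*a)) + b*(b*(a*b)) + b*(a*(b*b)) + a*(b*(b*b)))
          = (a+b)*((a+b)*((a+b)*(a+b))) - (a-b)*((a-b)*((a-b)*(a-b))) := by
        simp only [mul_add, add_mul, mul_sub, sub_mul]
        module
      rw [key, hx4 (a+b), hx4 (a-b), sub_zero]
    have e2 : (4:ℤ) • (b*(a*(a*a)) + a*(b*(a*a)) + a*(a*(b*a)) + a*(a*(a*b)))
        + (16:ℤ) • (b*(b*(b*a)) + b*(b*(a*b)) + b*(a*(b*b)) + a*(b*(b*b))) = 0 := by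
      have key : (4:ℤ) • (b*(a*(a*a)) + a*(b*(a*a)) + a*(a*(b*a)) + a*(a*(a*b)))
          + (16:ℤ) • (b*(b*(b*a)) + b*(b*(a*b)) + b*(a*(b*b)) + a*(b*(b*b)))
          = (a+(b+b))*((a+(b+b))*((a+(b+b))*(a+(b+b))))
            - (a-(b+b))*((a-(b+b))*((a-(b+b))*(a-(b+b)))) := by
        simp only [mul_add, add_mul, mul_sub, sub_mul]
        module
      rw [key, hx4 (a+(b+b)), hx4 (a-(b+b)), sub_zero]
    have e3 : (12:ℤ) • (b*(b*(b*a)) + b*(b*(a*b)) + b*(a*(b*b)) + a*(b*(b*b))) = 0 := by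
      have key : (12:ℤ) • (b*(b*(b*a)) + b*(b*(a*b)) + b*(a*(b*b)) + a*(b*(b*b)))
          = ((4:ℤ) • (b*(a*(a*a)) + a*(b*(a*a)) + a*(a*(b*a)) + a*(a*(a*b)))
              + (16:ℤ) • (b*(b*(b*a)) + b*(b*(a*b)) + b*(a*(b*b)) + a*(b*(b*b))))
            - ((2:ℤ) • (b*(a*(a*a)) + a*(b*(a*a)) + a*(a*(b*a)) + a*(a*(a*b)))
              + (2:ℤ) • (b*(b*(b*a)) + b*(b*(a*b)) + b*(a*(b*b)) + a*(b*(b*b))))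
            - ((2:ℤ) • (b*(a*(a*a)) + a*(b*(a*a)) + a*(a*(b*a)) + a*(a*(a*b)))
              + (2:ℤ) • (b*(b*(b*a)) + b*(b*(a*b)) + b*(a*(b*b)) + a*(b*(b*b)))) := by
        module
      rw [e1, e2] at key
      simpa using key
    have hD3 := c12 _ e3
    have e4 : (2:ℤ) • (b*(a*(a*a)) + a*(b*(a*a)) + a*(a*(b*a)) + a*(a*(a*b))) = 0 := by
      have key : (2:ℤ) • (b*(a*(a*a)) + a*(b*(a*a)) + a*(a*(b*a)) + a*(a*(a*b)))
          = ((2:ℤ) • (b*(a*(a*a)) + a*(b*(a*a)) + a*(a*(b*a)) + a*(a*(a*b)))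
              + (2:ℤ) • (b*(b*(b*a)) + b*(b*(a*b)) + b*(a*(b*b)) + a*(b*(b*b))))
            - (2:ℤ) • (b*(b*(b*a)) + b*(b*(a*b)) + b*(a*(b*b)) + a*(b*(b*b))) := by
        module
      rw [e1, hD3] at key
      simpa using key
    exact c2 _ e4
  -- Step 2: (4,1)-linearization of x(x²x²) = 0
  have rawI2 :
      y*((x*x)*(x*x)) + x*((y*x)*(x*x)) + x*((x*y)*(x*x)) + x*((x*x)*(y*x)) + x*((x*x)*(x*y)) = 0 := by
    have e1 : (2:ℤ) • (y*((x*x)*(x*x)) + x*((y*x)*(x*x)) + x*((x*y)*(x*x)) + x*((x*x)*(y*x)) + x*((x*x)*(x*y)))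
        + (2:ℤ) • (y*((y*y)*(x*x)) + y*((y*x)*(y*x)) + y*((y*x)*(x*y)) + y*((x*y)*(y*x)) + y*((x*y)*(x*y)) + y*((x*x)*(y*y))
            + x*((y*y)*(y*x)) + x*((y*y)*(x*y)) + x*((y*x)*(y*y)) + x*((x*y)*(y*y)))
        + (2:ℤ) • (y*((y*y)*(y*y))) = 0 := by
      have key : (2:ℤ) • (y*((x*x)*(x*x)) + x*((y*x)*(x*x)) + x*((x*y)*(x*x)) + x*((x*x)*(y*x)) + x*((x*x)*(x*y)))
          + (2:ℤ) • (y*((y*y)*(x*x)) + y*((y*x)*(y*x)) + y*((y*x)*(x*y)) + y*((x*y)*(y*x)) + y*((x*y)*(x*y)) + y*((x*x)*(y*y))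
              + x*((y*y)*(y*x)) + x*((y*y)*(x*y)) + x*((y*x)*(y*y)) + x*((x*y)*(y*y)))
          + (2:ℤ) • (y*((y*y)*(y*y)))
          = (x+y)*(((x+y)*(x+y))*((x+y)*(x+y))) - (x-y)*(((x-y)*(x-y))*((x-y)*(x-y))) := by
        simp only [mul_add, add_mul, mul_sub, sub_mul]
        module
      rw [key, hx5 (x+y), hx5 (x-y), sub_zero]
    have e2 : (4:ℤ) • (y*((x*x)*(x*x)) + x*((y*x)*(x*x)) + x*((x*y)*(x*x)) + x*((x*x)*(y*x)) + x*((x*x)*(x*y)))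
        + (16:ℤ) • (y*((y*y)*(x*x)) + y*((y*x)*(y*x)) + y*((y*x)*(x*y)) + y*((x*y)*(y*x)) + y*((x*y)*(x*y)) + y*((x*x)*(y*y))
            + x*((y*y)*(y*x)) + x*((y*y)*(x*y)) + x*((y*x)*(y*y)) + x*((x*y)*(y*y)))
        + (64:ℤ) • (y*((y*y)*(y*y))) = 0 := by
      have key : (4:ℤ) • (y*((x*x)*(x*x)) + x*((y*x)*(x*x)) + x*((x*y)*(x*x)) + x*((x*x)*(y*x)) + x*((x*x)*(x*y)))
          + (16:ℤ) • (y*((y*y)*(x*x)) + y*((y*x)*(y*x)) + y*((y*x)*(x*y)) + y*((x*y)*(y*x)) + y*((x*y)*(x*y)) + y*((x*x)*(y*y))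
              + x*((y*y)*(y*x)) + x*((y*y)*(x*y)) + x*((y*x)*(y*y)) + x*((x*y)*(y*y)))
          + (64:ℤ) • (y*((y*y)*(y*y)))
          = (x+(y+y))*(((x+(y+y))*(x+(y+y)))*((x+(y+y))*(x+(y+y))))
            - (x-(y+y))*(((x-(y+y))*(x-(y+y)))*((x-(y+y))*(x-(y+y)))) := by
        simp only [mul_add, add_mul, mul_sub, sub_mul]
        module
      rw [key, hx5 (x+(y+y)), hx5 (x-(y+y)), sub_zero]
    rw [hx5 y] at e1 e2
    have e3 : (12:ℤ) • (y*((y*y)*(x*x)) + y*((y*x)*(y*x)) + y*((y*x)*(x*y)) + y*((x*y)*(y*x)) + y*((x*y)*(x*y)) + y*((x*x)*(y*y))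
            + x*((y*y)*(y*x)) + x*((y*y)*(x*y)) + x*((y*x)*(y*y)) + x*((x*y)*(y*y))) = 0 := by
      have key : (12:ℤ) • (y*((y*y)*(x*x)) + y*((y*x)*(y*x)) + y*((y*x)*(x*y)) + y*((x*y)*(y*x)) + y*((x*y)*(x*y)) + y*((x*x)*(y*y))
              + x*((y*y)*(y*x)) + x*((y*y)*(x*y)) + x*((y*x)*(y*y)) + x*((x*y)*(y*y)))
          = ((4:ℤ) • (y*((x*x)*(x*x)) + x*((y*x)*(x*x)) + x*((x*y)*(x*x)) + x*((x*x)*(y*x)) + x*((x*x)*(x*y)))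
              + (16:ℤ) • (y*((y*y)*(x*x)) + y*((y*x)*(y*x)) + y*((y*x)*(x*y)) + y*((x*y)*(y*x)) + y*((x*y)*(x*y)) + y*((x*x)*(y*y))
                  + x*((y*y)*(y*x)) + x*((y*y)*(x*y)) + x*((y*x)*(y*y)) + x*((x*y)*(y*y)))
              + (64:ℤ) • ((0:A)))
            - ((2:ℤ) • (y*((x*x)*(x*x)) + x*((y*x)*(x*x)) + x*((x*y)*(x*x)) + x*((x*x)*(y*x)) + x*((x*x)*(x*y)))
              + (2:ℤ) • (y*((y*y)*(x*x)) + y*((y*x)*(y*x)) + y*((y*x)*(x*y)) + y*((x*y)*(y*x)) + y*((x*y)*(x*y)) + y*((x*x)*(y*y))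
                  + x*((y*y)*(y*x)) + x*((y*y)*(x*y)) + x*((y*x)*(y*y)) + x*((x*y)*(y*y)))
              + (2:ℤ) • ((0:A)))
            - ((2:ℤ) • (y*((x*x)*(x*x)) + x*((y*x)*(x*x)) + x*((x*y)*(x*x)) + x*((x*x)*(y*x)) + x*((x*x)*(x*y)))
              + (2:ℤ) • (y*((y*y)*(x*x)) + y*((y*x)*(y*x)) + y*((y*x)*(x*y)) + y*((x*y)*(y*x)) + y*((x*y)*(x*y)) + y*((x*x)*(y*y))
                  + x*((y*y)*(y*x)) + x*((y*y)*(x*y)) + x*((y*x)*(y*y)) + x*((x*y)*(y*y)))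
              + (2:ℤ) • ((0:A))) := by
        module
      rw [e1, e2] at key
      simpa using key
    have hE3 := c12 _ e3
    have e4 : (2:ℤ) • (y*((x*x)*(x*x)) + x*((y*x)*(x*x)) + x*((x*y)*(x*x)) + x*((x*x)*(y*x)) + x*((x*x)*(x*y))) = 0 := by
      have key : (2:ℤ) • (y*((x*x)*(x*x)) + x*((y*x)*(x*x)) + x*((x*y)*(x*x)) + x*((x*x)*(y*x)) + x*((x*x)*(x*y)))
          = ((2:ℤ) • (y*((x*x)*(x*x)) + x*((y*x)*(x*x)) + x*((x*y)*(x*x)) + x*((x*x)*(y*x)) + x*((x*x)*(x*y)))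
              + (2:ℤ) • (y*((y*y)*(x*x)) + y*((y*x)*(y*x)) + y*((y*x)*(x*y)) + y*((x*y)*(y*x)) + y*((x*y)*(x*y)) + y*((x*x)*(y*y))
                  + x*((y*y)*(y*x)) + x*((y*y)*(x*y)) + x*((y*x)*(y*y)) + x*((x*y)*(y*y)))
              + (2:ℤ) • ((0:A)))
            - (2:ℤ) • (y*((y*y)*(x*x)) + y*((y*x)*(y*x)) + y*((y*x)*(x*y)) + y*((x*y)*(y*x)) + y*((x*y)*(x*y)) + y*((x*x)*(y*y))
                  + x*((y*y)*(y*x)) + x*((y*y)*(x*y)) + x*((y*x)*(y*y)) + x*((x*y)*(y*y))) := by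
        module
      rw [e1, hE3] at key
      simpa using key
    exact c2 _ e4
  -- Step 3: linearize rawI1 in the x-direction by x² (odd-part extraction)
  have hF1 :
      y*((x*x)*(x*x)) + y*(x*((x*x)*x)) + y*(x*(x*(x*x)))
      + (x*x)*(y*(x*x)) + x*(y*((x*x)*x)) + x*(y*(x*(x*x)))
      + (x*x)*(x*(y*x)) + x*((x*x)*(y*x)) + x*(x*(y*(x*x)))
      + (x*x)*(x*(x*y)) + x*((x*x)*(x*y)) + x*(x*((x*x)*y)) = 0 := by
    have e1 : (2:ℤ) • (y*((x*x)*(x*x)) + y*(x*((x*x)*x)) + y*(x*(x*(x*x)))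
          + (x*x)*(y*(x*x)) + x*(y*((x*x)*x)) + x*(y*(x*(x*x)))
          + (x*x)*(x*(y*x)) + x*((x*x)*(y*x)) + x*(x*(y*(x*x)))
          + (x*x)*(x*(x*y)) + x*((x*x)*(x*y)) + x*(x*((x*x)*y)))
        + (2:ℤ) • (y*((x*x)*((x*x)*(x*x))) + (x*x)*(y*((x*x)*(x*x))) + (x*x)*((x*x)*(y*(x*x))) + (x*x)*((x*x)*((x*x)*y))) = 0 := by
      have key : (2:ℤ) • (y*((x*x)*(x*x)) + y*(x*((x*x)*x)) + y*(x*(x*(x*x)))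
            + (x*x)*(y*(x*x)) + x*(y*((x*x)*x)) + x*(y*(x*(x*x)))
            + (x*x)*(x*(y*x)) + x*((x*x)*(y*x)) + x*(x*(y*(x*x)))
            + (x*x)*(x*(x*y)) + x*((x*x)*(x*y)) + x*(x*((x*x)*y)))
          + (2:ℤ) • (y*((x*x)*((x*x)*(x*x))) + (x*x)*(y*((x*x)*(x*x))) + (x*x)*((x*x)*(y*(x*x))) + (x*x)*((x*x)*((x*x)*y)))
          = (y*((x+x*x)*((x+x*x)*(x+x*x))) + (x+x*x)*(y*((x+x*x)*(x+x*x)))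
              + (x+x*x)*((x+x*x)*(y*(x+x*x))) + (x+x*x)*((x+x*x)*((x+x*x)*y)))
            - (y*((x-x*x)*((x-x*x)*(x-x*x))) + (x-x*x)*(y*((x-x*x)*(x-x*x)))
              + (x-x*x)*((x-x*x)*(y*(x-x*x))) + (x-x*x)*((x-x*x)*((x-x*x)*y))) := by
        simp only [mul_add, add_mul, mul_sub, sub_mul]
        module
      rw [key, rawI1 (x+x*x) y, rawI1 (x-x*x) y, sub_zero]
    rw [rawI1 (x*x) y] at e1
    have e4 : (2:ℤ) • (y*((x*x)*(x*x)) + y*(x*((x*x)*x)) + y*(x*(x*(x*x)))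
          + (x*x)*(y*(x*x)) + x*(y*((x*x)*x)) + x*(y*(x*(x*x)))
          + (x*x)*(x*(y*x)) + x*((x*x)*(y*x)) + x*(x*(y*(x*x)))
          + (x*x)*(x*(x*y)) + x*((x*x)*(x*y)) + x*(x*((x*x)*y))) = 0 := by
      have key : (2:ℤ) • (y*((x*x)*(x*x)) + y*(x*((x*x)*x)) + y*(x*(x*(x*x)))
            + (x*x)*(y*(x*x)) + x*(y*((x*x)*x)) + x*(y*(x*(x*x)))
            + (x*x)*(x*(y*x)) + x*((x*x)*(y*x)) + x*(x*(y*(x*x)))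
            + (x*x)*(x*(x*y)) + x*((x*x)*(x*y)) + x*(x*((x*x)*y)))
          = ((2:ℤ) • (y*((x*x)*(x*x)) + y*(x*((x*x)*x)) + y*(x*(x*(x*x)))
            + (x*x)*(y*(x*x)) + x*(y*((x*x)*x)) + x*(y*(x*(x*x)))
            + (x*x)*(x*(y*x)) + x*((x*x)*(y*x)) + x*(x*(y*(x*x)))
            + (x*x)*(x*(x*y)) + x*((x*x)*(x*y)) + x*(x*((x*x)*y)))
            + (2:ℤ) • ((0:A))) - (2:ℤ) • ((0:A)) := by
        module
      rw [e1] at key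
      simpa using key
    exact c2 _ e4
  -- Step 4: commutativity normalization
  have I1c : (x*(x*x))*y + x*((x*x)*y) + x*(x*(x*y)) + x*(x*(x*y)) = 0 := by
    have h := rawI1 x y
    rw [hcomm y (x*(x*x)), hcomm y (x*x), hcomm y x] at h
    exact h
  have I2c : ((x*x)*(x*x))*y + x*((x*x)*(x*y)) + x*((x*x)*(x*y)) + x*((x*x)*(x*y)) + x*((x*x)*(x*y)) = 0 := by
    have h := rawI2
    rw [hcomm y ((x*x)*(x*x)), hcomm y x, hcomm (x*y) (x*x)] at h
    exact h
  have hLX3 : x*((x*(x*x))*y) + x*(x*((x*x)*y)) + x*(x*(x*(x*y))) + x*(x*(x*(x*y))) = 0 := by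
    have h := congrArg (fun t => x * t) I1c
    simp only [mul_add, mul_zero] at h
    exact h
  have F1c : ((x*x)*(x*x))*y + (x*x)*((x*x)*y) + x*((x*(x*x))*y) + x*((x*(x*x))*y)
      + (x*x)*(x*(x*y)) + x*((x*x)*(x*y)) + x*(x*((x*x)*y))
      + (x*x)*(x*(x*y)) + x*((x*x)*(x*y)) + x*(x*((x*x)*y)) = 0 := by
    have h := hF1
    rw [hcomm (x*x) x] at h
    rw [hx4 x] at h
    rw [mul_zero] at h
    rw [hcomm y (x*(x*x))] at h
    rw [hcomm y (x*x)] at h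
    rw [hcomm y x] at h
    rw [hcomm y ((x*x)*(x*x))] at h
    simp only [add_zero, zero_add] at h
    exact h
  -- Step 5: combine
  have comb : x * x * (x * x * (y)) -
      (((-2 : ℤ) • (x * x * (x * (x * (y))))) + (2 : ℤ) • (x * (x * x * (x * (y)))) + (4 : ℤ) • (x * (x * (x * (x * (y))))))
      = (((x*x)*(x*x))*y + (x*x)*((x*x)*y) + x*((x*(x*x))*y) + x*((x*(x*x))*y)
          + (x*x)*(x*(x*y)) + x*((x*x)*(x*y)) + x*(x*((x*x)*y))
          + (x*x)*(x*(x*y)) + x*((x*x)*(x*y)) + x*(x*((x*x)*y)))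
        - (((x*x)*(x*x))*y + x*((x*x)*(x*y)) + x*((x*x)*(x*y)) + x*((x*x)*(x*y)) + x*((x*x)*(x*y)))
        - ((x*((x*(x*x))*y) + x*(x*((x*x)*y)) + x*(x*(x*(x*y))) + x*(x*(x*(x*y))))
          + (x*((x*(x*x))*y) + x*(x*((x*x)*y)) + x*(x*(x*(x*y))) + x*(x*(x*(x*y))))) := by
    module
  rw [F1c, I2c, hLX3] at comb
  have hfin : x * x * (x * x * (y)) -
      (((-2 : ℤ) • (x * x * (x * (x * (y))))) + (2 : ℤ) • (x * (x * x * (x * (y)))) + (4 : ℤ) • (x * (x * (x * (x * (y))))))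
      = 0 := by simpa using comb
  exact sub_eq_zero.mp hfin
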